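/- Let V = C^d, P = x_1···x_d, 1 ≤ k < d, 1 ≤ p < d. The rank of the Koszul Young flattening P_{k,d-k}^{∧p}: S^k V* ⊗ Λ^p V → S^{d-k-1}V ⊗ Λ^{p+1}V equals S(p,d,k) := Σ_{s=max{0,p-k}}^{min{p,d-k-1}} (d choose s)(d-s choose d-k+p-2s)(d-k+p-2s-1 choose p-s). -/

import Mathlib

open MvPolynomial TensorProduct

/-- The iterated partial-derivative operator `∂^α`. -/
noncomputable def Dop {m : ℕ} (α : Fin m → ℕ) :
    Module.End ℂ (MvPolynomial (Fin m) ℂ) :=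
  (List.ofFn fun i : Fin m =>
    (((pderiv i).toLinearMap : Module.End ℂ (MvPolynomial (Fin m) ℂ)) ^ (α i))).prod

/-- The flattening of `P`, sending a constant-coefficient differential operator
(encoded by a polynomial in the dual variables via the monomial basis) to its
application to `P`.  Restricted to homogeneous operators of degree `k` this is
the catalecticant `P_{k,d-k} : S^k V^* → S^{d-k} V`. -/
noncomputable def flat {m : ℕ} (P : MvPolynomial (Fin m) ℂ) :
    MvPolynomial (Fin m) ℂ →ₗ[ℂ] MvPolynomial (Fin m) ℂ :=
  (MvPolynomial.basisMonomials (Fin m) ℂ).constr ℂ fun α => Dop (⇑α) P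

/-- The algebraic exterior derivative (Koszul differential)
`S^u V ⊗ Λ^v V → S^{u-1} V ⊗ Λ^{v+1} V`, given on monomials by
`x^α ⊗ ω ↦ Σ_i ∂_i(x^α) ⊗ (x_i ∧ ω)`. -/
noncomputable def Kz (m : ℕ) :
    MvPolynomial (Fin m) ℂ ⊗[ℂ] ExteriorAlgebra ℂ (Fin m → ℂ) →ₗ[ℂ]
      MvPolynomial (Fin m) ℂ ⊗[ℂ] ExteriorAlgebra ℂ (Fin m → ℂ) :=
  ∑ i : Fin m, TensorProduct.map (pderiv i).toLinearMap
    (LinearMap.mulLeft ℂ (ExteriorAlgebra.ι ℂ (Pi.single i 1)))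

/-- The subspace `S^k V^* ⊗ Λ^p V` inside polynomials ⊗ exterior algebra. -/
noncomputable def SkLp (m k p : ℕ) :
    Submodule ℂ (MvPolynomial (Fin m) ℂ ⊗[ℂ] ExteriorAlgebra ℂ (Fin m → ℂ)) :=
  Submodule.span ℂ {z | ∃ q ∈ homogeneousSubmodule (Fin m) ℂ k,
    ∃ w ∈ ((LinearMap.range (ExteriorAlgebra.ι ℂ (M := Fin m → ℂ))) ^ p :
      Submodule ℂ (ExteriorAlgebra ℂ (Fin m → ℂ))), z = q ⊗ₜ w}

/-- The Koszul Young flattening `P_{k,d-k}^{∧p}`, as the composition of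
`P_{k,d-k} ⊗ id` with the exterior derivative; it is to be restricted to
`SkLp`. -/
noncomputable def KYF {m : ℕ} (P : MvPolynomial (Fin m) ℂ) :
    MvPolynomial (Fin m) ℂ ⊗[ℂ] ExteriorAlgebra ℂ (Fin m → ℂ) →ₗ[ℂ]
      MvPolynomial (Fin m) ℂ ⊗[ℂ] ExteriorAlgebra ℂ (Fin m → ℂ) :=
  (Kz m).comp (TensorProduct.map (flat P) LinearMap.id)

noncomputable section
namespace KYFaux
variable {d : ℕ}

/-- indicator finsupp of a finset -/
def indF (T : Finset (Fin d)) : Fin d →₀ ℕ := ∑ i ∈ T, Finsupp.single i 1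

lemma indF_apply (T : Finset (Fin d)) (j : Fin d) :
    indF T j = if j ∈ T then 1 else 0 := by
  classical
  rw [indF, Finset.sum_apply']
  simp [Finsupp.single_apply, Finset.sum_ite_eq' T j (fun _ => 1)]

lemma indF_injective : Function.Injective (indF (d := d)) := by
  intro S T h
  ext j
  have := congrArg (fun f => f j) h
  simp only [indF_apply] at this
  by_cases hS : j ∈ S <;> by_cases hT : j ∈ T <;> simp_all

lemma indF_sub_single {T : Finset (Fin d)} {i : Fin d} (hi : i ∈ T) :
    indF T - Finsupp.single i 1 = indF (T.erase i) := by
  ext j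
  rw [Finsupp.tsub_apply]
  simp only [indF_apply, Finsupp.single_apply, Finset.mem_erase]
  by_cases h : j = i
  · subst h; simp [hi]
  · simp [h, Ne.symm h]

lemma indF_degree (T : Finset (Fin d)) : (indF T).degree = T.card := by
  classical
  have hs : (indF T).support = T := by
    ext j; simp [Finsupp.mem_support_iff, indF_apply]
  rw [Finsupp.degree_apply, hs]
  have : ∀ j ∈ T, indF T j = 1 := fun j hj => by simp [indF_apply, hj]
  rw [Finset.sum_congr rfl this]; simp

/-- the square-free monomial with support `T` -/
def xF (T : Finset (Fin d)) : MvPolynomial (Fin d) ℂ := monomial (indF T) 1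

lemma pderiv_xF (i : Fin d) (T : Finset (Fin d)) :
    pderiv i (xF T) = if i ∈ T then xF (T.erase i) else 0 := by
  rw [xF, pderiv_monomial]
  by_cases h : i ∈ T
  · rw [if_pos h, indF_sub_single h, indF_apply, if_pos h]
    norm_num [xF]
  · rw [if_neg h, indF_apply, if_neg h]
    norm_num

lemma xF_ne_zero (T : Finset (Fin d)) : xF T ≠ 0 := by
  simp [xF, monomial_eq_zero]


lemma pd_apply (j : Fin d) (q : MvPolynomial (Fin d) ℂ) :
    ((pderiv j).toLinearMap : Module.End ℂ (MvPolynomial (Fin d) ℂ)) q = pderiv j q := rfl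

lemma pdpow_xF (j : Fin d) (n : ℕ) (S : Finset (Fin d)) :
    (((pderiv j).toLinearMap : Module.End ℂ (MvPolynomial (Fin d) ℂ)) ^ n) (xF S)
      = if n = 0 then xF S else if n = 1 ∧ j ∈ S then xF (S.erase j) else 0 := by
  match n with
  | 0 => simp
  | 1 =>
    rw [pow_one, pd_apply, pderiv_xF]
    by_cases h : j ∈ S <;> simp [h]
  | (n+2) =>
    have h2 : (((pderiv j).toLinearMap : Module.End ℂ (MvPolynomial (Fin d) ℂ)) ^ 2) (xF S) = 0 := by
      rw [pow_two, Module.End.mul_apply, pd_apply, pd_apply, pderiv_xF]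
      by_cases h : j ∈ S
      · simp [h, pderiv_xF, Finset.notMem_erase]
      · simp [h]
    rw [pow_add, Module.End.mul_apply, h2, map_zero]
    simp

lemma listDop (α : Fin d → ℕ) : ∀ (l : List (Fin d)), l.Nodup → ∀ (T : Finset (Fin d)),
    ((l.map fun i => ((pderiv i).toLinearMap : Module.End ℂ (MvPolynomial (Fin d) ℂ)) ^ α i).prod)
        (xF T)
      = if ∀ i ∈ l, (α i = 0 ∨ (α i = 1 ∧ i ∈ T))
        then xF (T \ l.toFinset.filter (fun i => α i = 1)) else 0 := by
  intro l
  induction l with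
  | nil => intro _ T; simp
  | cons j t ih =>
    intro hnd T
    have hjt : j ∉ t := (List.nodup_cons.mp hnd).1
    have hndt : t.Nodup := (List.nodup_cons.mp hnd).2
    rw [List.map_cons, List.prod_cons, Module.End.mul_apply, ih hndt T]
    by_cases hc : ∀ i ∈ t, (α i = 0 ∨ (α i = 1 ∧ i ∈ T))
    · rw [if_pos hc, pdpow_xF]
      have hjF : j ∉ t.toFinset.filter (fun i => α i = 1) := by
        simp only [Finset.mem_filter, List.mem_toFinset]; tauto
      have hmem : j ∈ T \ t.toFinset.filter (fun i => α i = 1) ↔ j ∈ T := by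
        simp only [Finset.mem_sdiff]; tauto
      by_cases h0 : α j = 0
      · rw [if_pos h0, if_pos]
        · congr 1
          ext x
          simp only [Finset.mem_sdiff, Finset.mem_filter, List.mem_toFinset, List.toFinset_cons,
            Finset.mem_insert, List.mem_cons]
          constructor
          · rintro ⟨hx, hx2⟩
            refine ⟨hx, ?_⟩
            rintro ⟨rfl | hm, ha⟩
            · omega
            · exact hx2 ⟨hm, ha⟩
          · rintro ⟨hx, hx2⟩
            exact ⟨hx, fun ⟨hm, ha⟩ => hx2 ⟨Or.inr hm, ha⟩⟩
        · intro i hi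
          rcases List.mem_cons.mp hi with rfl | hi
          · exact Or.inl h0
          · exact hc i hi
      · rw [if_neg h0]
        by_cases h1 : α j = 1 ∧ j ∈ T
        · rw [if_pos ⟨h1.1, hmem.mpr h1.2⟩, if_pos]
          · congr 1
            ext x
            simp only [Finset.mem_erase, Finset.mem_sdiff, Finset.mem_filter, List.mem_toFinset,
              List.toFinset_cons, Finset.mem_insert, List.mem_cons]
            constructor
            · rintro ⟨hxj, hx, hx2⟩
              refine ⟨hx, ?_⟩
              rintro ⟨rfl | hm, ha⟩
              · exact hxj rfl
              · exact hx2 ⟨hm, ha⟩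
            · rintro ⟨hx, hx2⟩
              refine ⟨?_, hx, fun ⟨hm, ha⟩ => hx2 ⟨Or.inr hm, ha⟩⟩
              intro hxj
              exact hx2 ⟨Or.inl hxj, by rw [hxj]; exact h1.1⟩
          · intro i hi
            rcases List.mem_cons.mp hi with rfl | hi
            · exact Or.inr h1
            · exact hc i hi
        · rw [if_neg, if_neg]
          · intro hco
            rcases hco j (List.mem_cons_self) with h | h
            · exact h0 h
            · exact h1 h
          · rw [hmem]; tauto
    · rw [if_neg hc, map_zero, if_neg]
      intro hco
      exact hc fun i hi => hco i (List.mem_cons_of_mem j hi)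

lemma Dop_xF_univ (α : Fin d →₀ ℕ) :
    Dop ⇑α (xF Finset.univ)
      = if ∀ i, α i ≤ 1
        then xF (Finset.univ.filter (fun i => α i = 1))ᶜ else 0 := by
  rw [Dop, List.ofFn_eq_map, listDop _ _ (List.nodup_finRange d)]
  have h1 : (List.finRange d).toFinset = Finset.univ := by
    ext x; simp [List.mem_finRange]
  rw [h1]
  by_cases hc : ∀ i, α i ≤ 1
  · have hcond : ∀ i ∈ List.finRange d, (α i = 0 ∨ (α i = 1 ∧ i ∈ Finset.univ)) := by
      intro i _
      have := hc i
      rcases Nat.le_one_iff_eq_zero_or_eq_one.mp this with h | h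
      · exact Or.inl h
      · exact Or.inr ⟨h, Finset.mem_univ i⟩
    rw [if_pos hcond, if_pos hc, Finset.compl_eq_univ_sdiff]
  · have hcond : ¬ ∀ i ∈ List.finRange d, (α i = 0 ∨ (α i = 1 ∧ i ∈ Finset.univ)) := by
      intro hco
      apply hc
      intro i
      rcases hco i (List.mem_finRange i) with h | h
      · omega
      · omega
    rw [if_neg hcond, if_neg hc]

lemma flat_monomial (P : MvPolynomial (Fin d) ℂ) (α : Fin d →₀ ℕ) (c : ℂ) :
    flat P (monomial α c) = c • Dop ⇑α P := by
  have h : monomial α c = c • ((basisMonomials (Fin d) ℂ) α) := by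
    rw [coe_basisMonomials]
    rw [smul_monomial, smul_eq_mul, mul_one]
  rw [flat, h, map_smul, Module.Basis.constr_basis]


def ee (i : Fin d) : ExteriorAlgebra ℂ (Fin d → ℂ) := ExteriorAlgebra.ι ℂ (Pi.single i 1)

def eL (l : List (Fin d)) : ExteriorAlgebra ℂ (Fin d → ℂ) := (l.map ee).prod

def eF (S : Finset (Fin d)) : ExteriorAlgebra ℂ (Fin d → ℂ) := eL (S.sort (· ≤ ·))

lemma eL_nil : eL ([] : List (Fin d)) = 1 := rfl

lemma eL_cons (i : Fin d) (l : List (Fin d)) : eL (i :: l) = ee i * eL l := by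
  simp [eL]

lemma ee_sq (i : Fin d) : ee i * ee i = 0 := ExteriorAlgebra.ι_sq_zero _

lemma ee_anti (i j : Fin d) : ee i * ee j = -(ee j * ee i) := by
  have h := ExteriorAlgebra.ι_add_mul_swap (R := ℂ) (Pi.single i 1 : Fin d → ℂ)
    (Pi.single j 1 : Fin d → ℂ)
  rw [eq_neg_iff_add_eq_zero]
  exact h

lemma ee_mul_eL_of_mem (i : Fin d) : ∀ l : List (Fin d), i ∈ l → ee i * eL l = 0 := by
  intro l
  induction l with
  | nil => simp
  | cons j t ih =>
    intro hmem
    rw [eL_cons, ← mul_assoc]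
    rcases List.mem_cons.mp hmem with rfl | hmem
    · rw [ee_sq, zero_mul]
    · rw [ee_anti, neg_mul, mul_assoc, ih hmem, mul_zero, neg_zero]

lemma ee_mul_eL_of_not_mem (i : Fin d) : ∀ l : List (Fin d), i ∉ l →
    ∃ c : ℂ, (c = 1 ∨ c = -1) ∧ ee i * eL l = c • eL (l.orderedInsert (· ≤ ·) i) := by
  intro l
  induction l with
  | nil => exact fun _ => ⟨1, Or.inl rfl, by simp [List.orderedInsert, eL_cons]⟩
  | cons j t ih =>
    intro hmem
    have hij : i ≠ j := fun h => hmem (h ▸ List.mem_cons_self)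
    have hit : i ∉ t := fun h => hmem (List.mem_cons_of_mem j h)
    by_cases hle : i ≤ j
    · refine ⟨1, Or.inl rfl, ?_⟩
      rw [List.orderedInsert, if_pos hle, one_smul, ← eL_cons]
    · obtain ⟨c, hc, hmul⟩ := ih hit
      refine ⟨-c, ?_, ?_⟩
      · rcases hc with rfl | rfl
        · exact Or.inr rfl
        · exact Or.inl (by norm_num)
      · rw [List.orderedInsert, if_neg hle, eL_cons, ← mul_assoc, ee_anti, neg_mul,
          mul_assoc, hmul, mul_smul_comm, eL_cons, neg_smul]

lemma orderedInsert_sort (i : Fin d) (S : Finset (Fin d)) (h : i ∉ S) :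
    (S.sort (· ≤ ·)).orderedInsert (· ≤ ·) i = (insert i S).sort (· ≤ ·) := by
  have hperm : List.Perm ((S.sort (· ≤ ·)).orderedInsert (· ≤ ·) i)
      ((insert i S).sort (· ≤ ·)) :=
    ((List.perm_orderedInsert _ _ _).trans
      (((Finset.sort_perm_toList (r := (· ≤ ·)) S).cons i).trans
        ((Finset.toList_insert h).symm.trans (Finset.sort_perm_toList (r := (· ≤ ·)) (insert i S)).symm)))
  exact List.Perm.eq_of_pairwise'
    (List.Pairwise.orderedInsert _ _ (Finset.pairwise_sort _ _)) (Finset.pairwise_sort _ _) hperm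

lemma ee_mul_eF_of_mem (i : Fin d) (S : Finset (Fin d)) (h : i ∈ S) : ee i * eF S = 0 :=
  ee_mul_eL_of_mem i _ ((Finset.mem_sort _).mpr h)

lemma ee_mul_eF_of_not_mem (i : Fin d) (S : Finset (Fin d)) (h : i ∉ S) :
    ∃ c : ℂ, (c = 1 ∨ c = -1) ∧ ee i * eF S = c • eF (insert i S) := by
  obtain ⟨c, hc, hmul⟩ := ee_mul_eL_of_not_mem i (S.sort (· ≤ ·))
    (fun hmem => h ((Finset.mem_sort _).mp hmem))
  exact ⟨c, hc, by rw [eF, hmul, orderedInsert_sort i S h]; rfl⟩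

lemma eL_eq_eF : ∀ l : List (Fin d), (l.Nodup →
    ∃ c : ℂ, (c = 1 ∨ c = -1) ∧ eL l = c • eF l.toFinset) ∧ (¬ l.Nodup → eL l = 0) := by
  intro l
  induction l with
  | nil =>
    constructor
    · intro _
      refine ⟨1, Or.inl rfl, ?_⟩
      simp [eF, eL_nil]
    · intro h; exact absurd List.nodup_nil h
  | cons i t ih =>
    constructor
    · intro hnd
      have hit : i ∉ t := (List.nodup_cons.mp hnd).1
      obtain ⟨c, hc, heq⟩ := ih.1 (List.nodup_cons.mp hnd).2
      have hitF : i ∉ t.toFinset := fun h => hit (List.mem_toFinset.mp h)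
      obtain ⟨c', hc', heq'⟩ := ee_mul_eF_of_not_mem i t.toFinset hitF
      refine ⟨c * c', (by rcases hc with rfl | rfl <;> rcases hc' with rfl | rfl <;> simp), ?_⟩
      rw [eL_cons, heq, mul_smul_comm, heq', List.toFinset_cons, smul_smul]
    · intro hnd
      by_cases hit : i ∈ t
      · rw [eL_cons, ee_mul_eL_of_mem i t hit]
      · have : ¬ t.Nodup := fun h => hnd (List.nodup_cons.mpr ⟨hit, h⟩)
        rw [eL_cons, (ih.2 this), mul_zero]

lemma eL_mem_pow : ∀ l : List (Fin d),
    eL l ∈ ((LinearMap.range (ExteriorAlgebra.ι ℂ (M := Fin d → ℂ))) ^ l.length :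
      Submodule ℂ (ExteriorAlgebra ℂ (Fin d → ℂ))) := by
  intro l
  induction l with
  | nil =>
    rw [List.length_nil, pow_zero]
    exact ⟨1, by simp [eL_nil]⟩
  | cons i t ih =>
    rw [eL_cons, List.length_cons, pow_succ']
    exact Submodule.mul_mem_mul ⟨Pi.single i 1, rfl⟩ ih

lemma eF_mem_pow (S : Finset (Fin d)) :
    eF S ∈ ((LinearMap.range (ExteriorAlgebra.ι ℂ (M := Fin d → ℂ))) ^ S.card :
      Submodule ℂ (ExteriorAlgebra ℂ (Fin d → ℂ))) := by
  have := eL_mem_pow (S.sort (· ≤ ·))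
  rwa [Finset.length_sort] at this

lemma iota_mul_span (v : Fin d → ℂ) (n : ℕ)
    (x : ExteriorAlgebra ℂ (Fin d → ℂ))
    (hx : x ∈ Submodule.span ℂ {y | ∃ l : List (Fin d), l.length = n ∧ y = eL l}) :
    ExteriorAlgebra.ι ℂ v * x ∈
      Submodule.span ℂ {y | ∃ l : List (Fin d), l.length = n + 1 ∧ y = eL l} := by
  have h1 : (LinearMap.mulLeft ℂ (ExteriorAlgebra.ι ℂ v)) x ∈
      Submodule.span ℂ ((LinearMap.mulLeft ℂ (ExteriorAlgebra.ι ℂ v)) ''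
        {y | ∃ l : List (Fin d), l.length = n ∧ y = eL l}) :=
    Submodule.apply_mem_span_image_of_mem_span _ hx
  refine Submodule.span_le.mpr ?_ h1
  rintro _ ⟨y, ⟨l, hl, rfl⟩, rfl⟩
  simp only [LinearMap.mulLeft_apply]
  have hv : v = ∑ i, v i • (Pi.single i 1 : Fin d → ℂ) := by
    ext j
    rw [Finset.sum_apply]
    simp [Pi.single_apply]
  rw [hv, map_sum, Finset.sum_mul]
  apply Submodule.sum_mem
  intro i _
  rw [map_smul, smul_mul_assoc]
  apply Submodule.smul_mem
  exact Submodule.subset_span ⟨i :: l, by simp [hl], (eL_cons i l).symm⟩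

lemma pow_le_span_eF (p : ℕ) :
    ((LinearMap.range (ExteriorAlgebra.ι ℂ (M := Fin d → ℂ))) ^ p :
      Submodule ℂ (ExteriorAlgebra ℂ (Fin d → ℂ))) ≤
    Submodule.span ℂ {w | ∃ J : Finset (Fin d), J.card = p ∧ w = eF J} := by
  have step1 : ((LinearMap.range (ExteriorAlgebra.ι ℂ (M := Fin d → ℂ))) ^ p :
      Submodule ℂ (ExteriorAlgebra ℂ (Fin d → ℂ))) ≤
      Submodule.span ℂ {y | ∃ l : List (Fin d), l.length = p ∧ y = eL l} := by
    intro x hx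
    refine Submodule.pow_induction_on_left'
      (M := LinearMap.range (ExteriorAlgebra.ι ℂ (M := Fin d → ℂ)))
      (C := fun n z _ => z ∈ Submodule.span ℂ {y | ∃ l : List (Fin d), l.length = n ∧ y = eL l})
      ?_ ?_ ?_ hx
    · intro r
      rw [Algebra.algebraMap_eq_smul_one]
      exact Submodule.smul_mem _ _ (Submodule.subset_span ⟨[], rfl, rfl⟩)
    · intro z w i hz hw ihz ihw
      exact Submodule.add_mem _ ihz ihw
    · intro m hm i z hz ih
      obtain ⟨v, rfl⟩ := hm
      exact iota_mul_span v i z ih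
  refine le_trans step1 (Submodule.span_le.mpr ?_)
  rintro _ ⟨l, rfl, rfl⟩
  by_cases hnd : l.Nodup
  · obtain ⟨c, _, heq⟩ := (eL_eq_eF l).1 hnd
    rw [heq]
    apply Submodule.smul_mem
    exact Submodule.subset_span ⟨l.toFinset, by rw [List.toFinset_card_of_nodup hnd], rfl⟩
  · rw [(eL_eq_eF l).2 hnd]
    exact Submodule.zero_mem _


/-- coordinate-selection linear map used to build determinant functionals -/
def selL (K : Finset (Fin d)) (i : ℕ) : (Fin d → ℂ) →ₗ[ℂ] (Fin i → ℂ) where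
  toFun v b := if h : (b : ℕ) < (K.sort (· ≤ ·)).length
    then v ((K.sort (· ≤ ·)).get ⟨(b : ℕ), h⟩) else 0
  map_add' u v := by
    ext b
    split <;> rename_i h <;> rw [Finset.length_sort] at h <;> simp [h]
  map_smul' c v := by
    ext b
    split <;> rename_i h <;> rw [Finset.length_sort] at h <;> simp [h]

/-- "coefficient of `e_K`" functional on the exterior algebra -/
def lam (K : Finset (Fin d)) : ExteriorAlgebra ℂ (Fin d → ℂ) →ₗ[ℂ] ℂ :=
  ExteriorAlgebra.liftAlternating
    (fun i => Matrix.detRowAlternating.compLinearMap (selL K i))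

lemma eL_eq_iMulti (l : List (Fin d)) :
    eL l = ExteriorAlgebra.ιMulti ℂ l.length (fun a => Pi.single (l.get a) 1) := by
  rw [ExteriorAlgebra.ιMulti_apply, eL]
  conv_lhs => rw [← List.ofFn_get l]
  rw [List.map_ofFn]
  rfl

lemma lam_eL (K : Finset (Fin d)) (l : List (Fin d)) :
    lam K (eL l) = Matrix.det (Matrix.of fun a b : Fin l.length =>
      selL K l.length (Pi.single (l.get a) (1:ℂ)) b) := by
  rw [eL_eq_iMulti, lam, ExteriorAlgebra.liftAlternating_apply_ιMulti,
    AlternatingMap.compLinearMap_apply]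
  rfl

lemma lam_eL_zero (K : Finset (Fin d)) (l : List (Fin d)) (hnd : l.Nodup)
    (hlen : l.length = K.card) (hne : l.toFinset ≠ K) : lam K (eL l) = 0 := by
  rw [lam_eL]
  have hsub : ¬ l.toFinset ⊆ K := by
    intro hsub
    exact hne (Finset.eq_of_subset_of_card_le hsub
      (by rw [List.toFinset_card_of_nodup hnd, hlen]))
  obtain ⟨x, hxl, hxK⟩ : ∃ x, x ∈ l.toFinset ∧ x ∉ K := by
    by_contra hcon
    push_neg at hcon
    exact hsub hcon
  obtain ⟨a, ha⟩ := List.get_of_mem (List.mem_toFinset.mp hxl)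
  apply Matrix.det_eq_zero_of_row_eq_zero a
  intro b
  simp only [Matrix.of_apply, selL, LinearMap.coe_mk, AddHom.coe_mk]
  by_cases h : (b : ℕ) < (K.sort (· ≤ ·)).length
  · rw [dif_pos h, ha, Pi.single_apply, if_neg]
    intro heq
    apply hxK
    rw [← heq]
    exact (Finset.mem_sort _).mp (List.get_mem _ _)
  · rw [dif_neg h]

lemma lam_eL_ne_zero (K : Finset (Fin d)) (l : List (Fin d)) (hnd : l.Nodup)
    (hK : l.toFinset = K) : lam K (eL l) ≠ 0 := by
  rw [lam_eL]
  have hlen : (K.sort (· ≤ ·)).length = l.length := by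
    rw [Finset.length_sort, ← hK, List.toFinset_card_of_nodup hnd]
  have hmem : ∀ a : Fin l.length, l.get a ∈ K.sort (· ≤ ·) := by
    intro a
    rw [Finset.mem_sort, ← hK]
    exact List.mem_toFinset.mpr (List.get_mem _ _)
  set s := K.sort (· ≤ ·) with hs
  have hnds : s.Nodup := K.sort_nodup _
  -- the permutation
  have hidx : ∀ a : Fin l.length, (s.idxOf (l.get a)) < l.length := by
    intro a
    rw [← hlen]
    exact List.idxOf_lt_length_iff.mpr (hmem a)
  set σf : Fin l.length → Fin l.length := fun a => ⟨s.idxOf (l.get a), hidx a⟩ with hσf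
  have hget : ∀ a, s.get ⟨(σf a : ℕ), by rw [hlen]; exact (σf a).2⟩ = l.get a := by
    intro a
    exact List.idxOf_get (List.idxOf_lt_length_iff.mpr (hmem a))
  have hinj : Function.Injective σf := by
    intro a a' h
    have h3 : l.get a = l.get a' := by
      have := hget a
      rw [h] at this
      rw [← this, ← hget a']
    exact (List.nodup_iff_injective_get.mp hnd) h3
  have hbij := Finite.injective_iff_bijective.mp hinj
  set σ : Equiv.Perm (Fin l.length) := Equiv.ofBijective σf hbij with hσ
  have hMeq : (Matrix.of fun a b : Fin l.length =>
      selL K l.length (Pi.single (l.get a) (1:ℂ)) b) = σ.permMatrix ℂ := by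
    ext a b
    simp only [Matrix.of_apply, selL, LinearMap.coe_mk, AddHom.coe_mk]
    have hb : (b : ℕ) < s.length := by rw [hlen]; exact b.2
    rw [dif_pos hb, Pi.single_apply]
    have heq : (s.get ⟨(b : ℕ), hb⟩ = l.get a) ↔ (σ a = b) := by
      constructor
      · intro h
        have : σf a = b := by
          apply Fin.ext
          have : s.idxOf (s.get ⟨(b:ℕ), hb⟩) = (b : ℕ) := List.get_idxOf hnds _
          rw [hσf]
          simp only [← h, this]
        exact this
      · intro h
        have hfb : σf a = b := h
        have hafb : ((σf a : ℕ)) = (b : ℕ) := congrArg Fin.val hfb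
        rw [← hget a]
        congr 1
        exact Fin.ext hafb.symm
    rw [Equiv.Perm.permMatrix, PEquiv.toMatrix_apply, Equiv.toPEquiv_apply]
    by_cases h : s.get ⟨(b:ℕ), hb⟩ = l.get a
    · rw [if_pos h, if_pos]
      simp [heq.mp h]
    · rw [if_neg h, if_neg]
      intro hcon
      exact h (heq.mpr (Option.mem_some_iff.mp hcon))
  rw [hMeq, Matrix.det_permutation]
  rcases Int.units_eq_one_or (Equiv.Perm.sign σ) with h | h <;> rw [h] <;> norm_num

/-- the tensor coefficient functional -/
def mu (β : Fin d →₀ ℕ) (K : Finset (Fin d)) :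
    MvPolynomial (Fin d) ℂ ⊗[ℂ] ExteriorAlgebra ℂ (Fin d → ℂ) →ₗ[ℂ] ℂ :=
  (TensorProduct.lid ℂ ℂ).toLinearMap.comp (TensorProduct.map (lcoeff ℂ β) (lam K))

lemma mu_tmul (β : Fin d →₀ ℕ) (K : Finset (Fin d)) (q : MvPolynomial (Fin d) ℂ)
    (w : ExteriorAlgebra ℂ (Fin d → ℂ)) :
    mu β K (q ⊗ₜ w) = coeff β q * lam K w := by
  simp [mu, lcoeff_apply, smul_eq_mul]


lemma Kz_tmul (q : MvPolynomial (Fin d) ℂ) (w : ExteriorAlgebra ℂ (Fin d → ℂ)) :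
    Kz d (q ⊗ₜ w) = ∑ i, pderiv i q ⊗ₜ (ee i * w) := by
  rw [Kz, LinearMap.sum_apply]
  apply Finset.sum_congr rfl
  intro i _
  rfl

lemma Kz_xF_tmul (T : Finset (Fin d)) (w : ExteriorAlgebra ℂ (Fin d → ℂ)) :
    Kz d (xF T ⊗ₜ w) = ∑ i ∈ T, xF (T.erase i) ⊗ₜ (ee i * w) := by
  rw [Kz_tmul]
  rw [← Finset.sum_subset (Finset.subset_univ T)]
  · apply Finset.sum_congr rfl
    intro i hi
    rw [pderiv_xF, if_pos hi]
  · intro i _ hiT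
    rw [pderiv_xF, if_neg hiT, zero_tmul]

lemma Kz_xF_eF (T J : Finset (Fin d)) :
    Kz d (xF T ⊗ₜ eF J) = ∑ i ∈ T \ J, xF (T.erase i) ⊗ₜ (ee i * eF J) := by
  rw [Kz_xF_tmul]
  rw [← Finset.sum_subset (Finset.sdiff_subset (s := T) (t := J))]
  intro i hiT hi
  have hiJ : i ∈ J := by
    by_contra h
    exact hi (Finset.mem_sdiff.mpr ⟨hiT, h⟩)
  rw [ee_mul_eF_of_mem i J hiJ, tmul_zero]

lemma double_sum_zero (T : Finset (Fin d))
    {M : Type*} [AddCommGroup M] [Module ℂ M] (f : Fin d → Fin d → M)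
    (hanti : ∀ i j, i ≠ j → f i j = - f j i) :
    ∑ i ∈ T, ∑ j ∈ T.erase i, f i j = 0 := by
  classical
  have hg : ∀ i ∈ T, ∑ j ∈ T.erase i, f i j
      = ∑ j ∈ T, (if i ≠ j then f i j else 0) := by
    intro i _
    rw [Finset.sum_ite, Finset.sum_const_zero, add_zero]
    apply Finset.sum_congr
    · ext j
      simp only [Finset.mem_erase, Finset.mem_filter]
      constructor
      · rintro ⟨h1, h2⟩; exact ⟨h2, fun h => h1 (h.symm ▸ rfl)⟩
      · rintro ⟨h1, h2⟩; exact ⟨fun h => h2 (h ▸ rfl), h1⟩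
    · intros; rfl
  rw [Finset.sum_congr rfl hg]
  set S := ∑ i ∈ T, ∑ j ∈ T, (if i ≠ j then f i j else 0) with hS
  have hswap : S = ∑ j ∈ T, ∑ i ∈ T, (if i ≠ j then f i j else 0) := Finset.sum_comm
  have hterm : ∀ i ∈ T, ∀ j ∈ T, (if i ≠ j then f i j else 0)
      = -(if j ≠ i then f j i else 0) := by
    intro i _ j _
    by_cases h : i = j
    · subst h; simp
    · rw [if_pos h, if_pos (Ne.symm h), hanti i j h]
  have hneg : S = -S := by
    conv_lhs => rw [hS]
    calc ∑ i ∈ T, ∑ j ∈ T, (if i ≠ j then f i j else 0)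
        = ∑ i ∈ T, ∑ j ∈ T, -(if j ≠ i then f j i else 0) :=
          Finset.sum_congr rfl fun i hi => Finset.sum_congr rfl fun j hj => hterm i hi j hj
      _ = -∑ i ∈ T, ∑ j ∈ T, (if j ≠ i then f j i else 0) := by
          simp only [Finset.sum_neg_distrib]
      _ = -∑ j ∈ T, ∑ i ∈ T, (if j ≠ i then f j i else 0) := by rw [Finset.sum_comm]
      _ = -S := by rw [hS]
  have h2 : (2 : ℂ) • S = 0 := by
    rw [two_smul]
    nth_rewrite 2 [hneg]
    rw [add_neg_cancel]
  rcases smul_eq_zero.mp h2 with h | h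
  · norm_num at h
  · exact h


/-- the generators of the image -/
def vTJ (T J : Finset (Fin d)) :
    MvPolynomial (Fin d) ℂ ⊗[ℂ] ExteriorAlgebra ℂ (Fin d → ℂ) := Kz d (xF T ⊗ₜ eF J)

/-- a pair `(T, J)` is good if the minimum of the symmetric difference lies in `T`. -/
def Good (T J : Finset (Fin d)) : Prop :=
  ∃ h : (T \ J).Nonempty, ∀ j ∈ J \ T, (T \ J).min' h < j

lemma KzKz_zero (T J : Finset (Fin d)) :
    ∑ i ∈ T, Kz d (xF (T.erase i) ⊗ₜ (ee i * eF J)) = 0 := by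
  have hcongr : ∀ i ∈ T, Kz d (xF (T.erase i) ⊗ₜ (ee i * eF J))
      = ∑ j ∈ T.erase i, xF ((T.erase i).erase j) ⊗ₜ (ee j * (ee i * eF J)) := by
    intro i _
    exact Kz_xF_tmul (T.erase i) (ee i * eF J)
  rw [Finset.sum_congr rfl hcongr]
  apply double_sum_zero T (fun i j => xF ((T.erase i).erase j) ⊗ₜ (ee j * (ee i * eF J)))
  intro i j hij
  have h1 : (T.erase i).erase j = (T.erase j).erase i := Finset.erase_right_comm
  have h2 : ee j * (ee i * eF J) = -(ee i * (ee j * eF J)) := by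
    rw [← mul_assoc, ee_anti, neg_mul, mul_assoc]
  rw [h1, h2, tmul_neg]

lemma vTJ_mem_span_good (T J : Finset (Fin d)) :
    vTJ T J ∈ Submodule.span ℂ
      {z | ∃ T' J' : Finset (Fin d), T'.card = T.card ∧ J'.card = J.card ∧
        Good T' J' ∧ z = vTJ T' J'} := by
  classical
  by_cases hTJ : (T \ J).Nonempty
  · by_cases hgood : Good T J
    · exact Submodule.subset_span ⟨T, J, rfl, rfl, hgood, rfl⟩
    · set D := (T \ J) ∪ (J \ T) with hD
      have hDne : D.Nonempty := hTJ.mono Finset.subset_union_left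
      set m := D.min' hDne with hm
      have hmD : m ∈ D := Finset.min'_mem _ _
      have hmin : ∀ x ∈ D, m ≤ x := fun x hx => Finset.min'_le _ x hx
      have hmJT : m ∈ J \ T := by
        rcases Finset.mem_union.mp hmD with h | h
        · exfalso
          apply hgood
          refine ⟨hTJ, ?_⟩
          intro j hj
          have hjD : j ∈ D := Finset.mem_union_right _ hj
          have hjm : j ≠ m := by
            intro hjm
            rw [hjm] at hj
            exact (Finset.mem_sdiff.mp hj).2 (Finset.mem_sdiff.mp h).1
          calc (T \ J).min' hTJ ≤ m := Finset.min'_le _ m h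
            _ < j := lt_of_le_of_ne (hmin j hjD) (Ne.symm hjm)
        · exact h
      have hmJ : m ∈ J := (Finset.mem_sdiff.mp hmJT).1
      have hmT : m ∉ T := (Finset.mem_sdiff.mp hmJT).2
      set J' := J.erase m with hJ'
      have relation := KzKz_zero (insert m T) J'
      rw [Finset.sum_insert hmT, Finset.erase_insert hmT] at relation
      obtain ⟨c, hc, hcmul⟩ := ee_mul_eF_of_not_mem m J' (Finset.notMem_erase m J)
      rw [hcmul, Finset.insert_erase hmJ] at relation
      have hterm1 : Kz d (xF T ⊗ₜ (c • eF J)) = c • vTJ T J := by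
        rw [tmul_smul, map_smul, vTJ]
      rw [hterm1] at relation
      have hcne : c ≠ 0 := by rcases hc with rfl | rfl <;> norm_num
      have hS : ∑ i ∈ T, Kz d (xF ((insert m T).erase i) ⊗ₜ (ee i * eF J')) ∈
          Submodule.span ℂ {z | ∃ T' J' : Finset (Fin d), T'.card = T.card ∧ J'.card = J.card ∧
            Good T' J' ∧ z = vTJ T' J'} := by
        apply Submodule.sum_mem
        intro i hiT
        have him : i ≠ m := fun h => hmT (h ▸ hiT)
        by_cases hiJ' : i ∈ J'
        · rw [ee_mul_eF_of_mem i J' hiJ', tmul_zero, map_zero]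
          exact Submodule.zero_mem _
        · have hiJ : i ∉ J := fun h => hiJ' (Finset.mem_erase.mpr ⟨him, h⟩)
          obtain ⟨ci, hci, hcimul⟩ := ee_mul_eF_of_not_mem i J' hiJ'
          rw [hcimul, tmul_smul, map_smul]
          apply Submodule.smul_mem
          have hiD : i ∈ D := Finset.mem_union_left _ (Finset.mem_sdiff.mpr ⟨hiT, hiJ⟩)
          have hmi : m < i := lt_of_le_of_ne (hmin i hiD) (Ne.symm him)
          have hmTT : m ∈ (insert m T).erase i \ insert i J' := by
            rw [Finset.mem_sdiff, Finset.mem_erase, Finset.mem_insert]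
            refine ⟨⟨Ne.symm him, Or.inl rfl⟩, ?_⟩
            rw [Finset.mem_insert]
            push_neg
            exact ⟨Ne.symm him, Finset.notMem_erase m J⟩
          have hGood : Good ((insert m T).erase i) (insert i J') := by
            refine ⟨⟨m, hmTT⟩, ?_⟩
            intro j hj
            rw [Finset.mem_sdiff, Finset.mem_insert] at hj
            obtain ⟨hj1, hj2⟩ := hj
            have hmj : m < j := by
              rcases hj1 with rfl | hjJ'
              · exact hmi
              · have hjJ : j ∈ J := (Finset.mem_erase.mp hjJ').2
                have hjm : j ≠ m := (Finset.mem_erase.mp hjJ').1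
                have hjT : j ∉ T := by
                  intro hjT
                  apply hj2
                  rw [Finset.mem_erase, Finset.mem_insert]
                  refine ⟨?_, Or.inr hjT⟩
                  intro hji
                  exact hiJ (hji ▸ hjJ)
                have hjD : j ∈ D := Finset.mem_union_right _ (Finset.mem_sdiff.mpr ⟨hjJ, hjT⟩)
                exact lt_of_le_of_ne (hmin j hjD) (Ne.symm hjm)
            exact lt_of_le_of_lt (Finset.min'_le _ m hmTT) hmj
          refine Submodule.subset_span ⟨(insert m T).erase i, insert i J', ?_, ?_, hGood, rfl⟩
          · rw [Finset.card_erase_of_mem (Finset.mem_insert_of_mem hiT),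
              Finset.card_insert_of_notMem hmT]
            omega
          · rw [Finset.card_insert_of_notMem hiJ', hJ', Finset.card_erase_of_mem hmJ]
            have : 1 ≤ J.card := Finset.card_pos.mpr ⟨m, hmJ⟩
            omega
      have heq : vTJ T J = c⁻¹ • (- ∑ i ∈ T, Kz d (xF ((insert m T).erase i) ⊗ₜ (ee i * eF J'))) := by
        have h1 : c • vTJ T J = - ∑ i ∈ T, Kz d (xF ((insert m T).erase i) ⊗ₜ (ee i * eF J')) :=
          eq_neg_of_add_eq_zero_left relation
        rw [← h1, smul_smul, inv_mul_cancel₀ hcne, one_smul]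
      rw [heq]
      exact Submodule.smul_mem _ _ (Submodule.neg_mem _ hS)
  · have hempty : T \ J = ∅ := Finset.not_nonempty_iff_eq_empty.mp hTJ
    have : vTJ T J = 0 := by
      rw [vTJ, Kz_xF_eF, hempty, Finset.sum_empty]
    rw [this]
    exact Submodule.zero_mem _


lemma coeff_xF (A B : Finset (Fin d)) :
    coeff (indF A) (xF B) = if A = B then 1 else 0 := by
  rw [xF, coeff_monomial]
  by_cases h : A = B
  · rw [if_pos h, if_pos (by rw [h])]
  · rw [if_neg h, if_neg (fun hc => h (indF_injective hc).symm)]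

lemma ee_mul_eF_eq_eL (i : Fin d) (J : Finset (Fin d)) :
    ee i * eF J = eL (i :: J.sort (· ≤ ·)) := by
  rw [eL_cons, eF]

lemma cons_sort_nodup (i : Fin d) (J : Finset (Fin d)) (h : i ∉ J) :
    (i :: J.sort (· ≤ ·)).Nodup :=
  List.nodup_cons.mpr ⟨fun hc => h ((Finset.mem_sort _).mp hc), J.sort_nodup _⟩

lemma cons_sort_toFinset (i : Fin d) (J : Finset (Fin d)) :
    (i :: J.sort (· ≤ ·)).toFinset = insert i J := by
  rw [List.toFinset_cons, Finset.sort_toFinset]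

/-- injectivity of the leading-term data for good pairs -/
lemma key_inj (T J T' J' : Finset (Fin d)) (hg : Good T J) (hg' : Good T' J')
    (hne : (T \ J).Nonempty) (hne' : (T' \ J').Nonempty) (i : Fin d) (hi : i ∈ T' \ J')
    (hE : T.erase ((T \ J).min' hne) = T'.erase i)
    (hI : insert ((T \ J).min' hne) J = insert i J') :
    T = T' ∧ J = J' := by
  classical
  set m := (T \ J).min' hne with hm
  have hmTJ : m ∈ T \ J := Finset.min'_mem _ _
  have hmT : m ∈ T := (Finset.mem_sdiff.mp hmTJ).1
  have hmJ : m ∉ J := (Finset.mem_sdiff.mp hmTJ).2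
  have hiT' : i ∈ T' := (Finset.mem_sdiff.mp hi).1
  have hiJ' : i ∉ J' := (Finset.mem_sdiff.mp hi).2
  -- unions and intersections
  have hU : T ∪ J = T' ∪ J' := by
    have h1 : T ∪ J = T.erase m ∪ insert m J := by
      ext x
      simp only [Finset.mem_union, Finset.mem_erase, Finset.mem_insert]
      by_cases hx : x = m
      · subst hx; tauto
      · tauto
    have h2 : T' ∪ J' = T'.erase i ∪ insert i J' := by
      ext x
      simp only [Finset.mem_union, Finset.mem_erase, Finset.mem_insert]
      by_cases hx : x = i
      · subst hx; tauto
      · tauto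
    rw [h1, h2, hE, hI]
  have hS : T ∩ J = T' ∩ J' := by
    have h1 : T ∩ J = T.erase m ∩ insert m J := by
      ext x
      simp only [Finset.mem_inter, Finset.mem_erase, Finset.mem_insert]
      constructor
      · rintro ⟨hxT, hxJ⟩
        have : x ≠ m := fun h => hmJ (h ▸ hxJ)
        tauto
      · rintro ⟨⟨hxm, hxT⟩, hx2⟩
        rcases hx2 with rfl | hxJ
        · exact absurd rfl hxm
        · exact ⟨hxT, hxJ⟩
    have h2 : T' ∩ J' = T'.erase i ∩ insert i J' := by
      ext x
      simp only [Finset.mem_inter, Finset.mem_erase, Finset.mem_insert]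
      constructor
      · rintro ⟨hxT, hxJ⟩
        have : x ≠ i := fun h => hiJ' (h ▸ hxJ)
        tauto
      · rintro ⟨⟨hxm, hxT⟩, hx2⟩
        rcases hx2 with rfl | hxJ
        · exact absurd rfl hxm
        · exact ⟨hxT, hxJ⟩
    rw [h1, h2, hE, hI]
  -- both sdiffs sit in the common symmetric difference D
  set D := (T ∪ J) \ (T ∩ J) with hD
  have hsubTJ : T \ J ⊆ D := by
    intro x hx
    rw [Finset.mem_sdiff] at hx ⊢
    exact ⟨Finset.mem_union_left _ hx.1, fun hc => hx.2 (Finset.mem_inter.mp hc).2⟩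
  have hsubJT : J \ T ⊆ D := by
    intro x hx
    rw [Finset.mem_sdiff] at hx ⊢
    exact ⟨Finset.mem_union_right _ hx.1, fun hc => hx.2 (Finset.mem_inter.mp hc).1⟩
  have hsubTJ' : T' \ J' ⊆ D := by
    intro x hx
    rw [Finset.mem_sdiff] at hx ⊢
    rw [hU, hS]
    exact ⟨Finset.mem_union_left _ hx.1, fun hc => hx.2 (Finset.mem_inter.mp hc).2⟩
  have hsubJT' : J' \ T' ⊆ D := by
    intro x hx
    rw [Finset.mem_sdiff] at hx ⊢
    rw [hU, hS]
    exact ⟨Finset.mem_union_right _ hx.1, fun hc => hx.2 (Finset.mem_inter.mp hc).1⟩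
  have hDsub : ∀ x ∈ D, x ∈ T \ J ∨ x ∈ J \ T := by
    intro x hx
    rw [Finset.mem_sdiff, Finset.mem_union, Finset.mem_inter] at hx
    rw [Finset.mem_sdiff, Finset.mem_sdiff]
    tauto
  have hDsub' : ∀ x ∈ D, x ∈ T' \ J' ∨ x ∈ J' \ T' := by
    intro x hx
    rw [hD, hU, hS] at hx
    rw [Finset.mem_sdiff, Finset.mem_union, Finset.mem_inter] at hx
    rw [Finset.mem_sdiff, Finset.mem_sdiff]
    tauto
  obtain ⟨hneT, hltT⟩ := hg
  obtain ⟨hneT', hltT'⟩ := hg'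
  set m' := (T' \ J').min' hne' with hm'
  have hm'TJ : m' ∈ T' \ J' := Finset.min'_mem _ _
  -- m is the min of D, and so is m'
  have hminD : ∀ x ∈ D, m ≤ x := by
    intro x hx
    rcases hDsub x hx with h | h
    · exact Finset.min'_le _ _ h
    · exact le_of_lt (hltT x h)
  have hminD' : ∀ x ∈ D, m' ≤ x := by
    intro x hx
    rcases hDsub' x hx with h | h
    · exact Finset.min'_le _ _ h
    · have := hltT' x h
      -- min' over hneT' with hne' proofs identical
      exact le_of_lt this
  have hmm' : m = m' := by
    have h1 : m ≤ m' := hminD m' (hsubTJ' hm'TJ)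
    have h2 : m' ≤ m := hminD' m (hsubTJ hmTJ)
    exact le_antisymm h1 h2
  have hieqm : i = m := by
    by_contra hne2
    have hmI : m ∈ insert i J' := by rw [← hI]; exact Finset.mem_insert_self m J
    rcases Finset.mem_insert.mp hmI with h | h
    · exact hne2 h.symm
    · have : m ∉ J' := by
        rw [hmm']
        exact (Finset.mem_sdiff.mp hm'TJ).2
      exact this h
  subst hieqm
  have hTT' : T = T' := by
    ext x
    by_cases hx : x = m
    · subst hx; simp [hmT, hiT']
    · constructor
      · intro hxT
        have hxe : x ∈ T.erase m := Finset.mem_erase.mpr ⟨hx, hxT⟩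
        rw [hE] at hxe
        exact (Finset.mem_erase.mp hxe).2
      · intro hxT
        have hxe : x ∈ T'.erase m := Finset.mem_erase.mpr ⟨hx, hxT⟩
        rw [← hE] at hxe
        exact (Finset.mem_erase.mp hxe).2
  have hJJ2 : J = J' := by
    ext x
    by_cases hx : x = m
    · subst hx; simp [hmJ, hiJ']
    · constructor
      · intro hxJ
        have hxe : x ∈ insert m J := Finset.mem_insert_of_mem hxJ
        rw [hI] at hxe
        rcases Finset.mem_insert.mp hxe with h | h
        · exact absurd h hx
        · exact h
      · intro hxJ
        have hxe : x ∈ insert m J' := Finset.mem_insert_of_mem hxJ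
        rw [← hI] at hxe
        rcases Finset.mem_insert.mp hxe with h | h
        · exact absurd h hx
        · exact h
  exact ⟨hTT', hJJ2⟩

lemma mu_vTJ_diag (T J : Finset (Fin d)) (hne : (T \ J).Nonempty) :
    mu (indF (T.erase ((T \ J).min' hne))) (insert ((T \ J).min' hne) J) (vTJ T J) ≠ 0 := by
  classical
  set m := (T \ J).min' hne with hm
  have hmTJ : m ∈ T \ J := Finset.min'_mem _ _
  have hmT : m ∈ T := (Finset.mem_sdiff.mp hmTJ).1
  have hmJ : m ∉ J := (Finset.mem_sdiff.mp hmTJ).2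
  rw [vTJ, Kz_xF_eF, map_sum]
  rw [Finset.sum_eq_single m]
  · rw [mu_tmul, coeff_xF, if_pos rfl, one_mul, ee_mul_eF_eq_eL]
    exact lam_eL_ne_zero _ _ (cons_sort_nodup m J hmJ) (cons_sort_toFinset m J)
  · intro i hiTJ him
    rw [mu_tmul, coeff_xF, if_neg, zero_mul]
    intro hEq
    have hiT : i ∈ T := (Finset.mem_sdiff.mp hiTJ).1
    have : m ∈ T.erase i := Finset.mem_erase.mpr ⟨fun h => him (h.symm), hmT⟩
    rw [← hEq] at this
    exact (Finset.mem_erase.mp this).1 rfl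
  · intro hnotmem
    exact absurd hmTJ hnotmem

lemma mu_vTJ_off (T J T' J' : Finset (Fin d)) (hg : Good T J) (hg' : Good T' J')
    (hne : (T \ J).Nonempty) (hne' : (T' \ J').Nonempty)
    (hJcard : J.card = J'.card)
    (hdiff : ¬(T = T' ∧ J = J')) :
    mu (indF (T.erase ((T \ J).min' hne))) (insert ((T \ J).min' hne) J) (vTJ T' J') = 0 := by
  classical
  set m := (T \ J).min' hne with hm
  have hmTJ : m ∈ T \ J := Finset.min'_mem _ _
  have hmJ : m ∉ J := (Finset.mem_sdiff.mp hmTJ).2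
  rw [vTJ, Kz_xF_eF, map_sum]
  apply Finset.sum_eq_zero
  intro i hiTJ
  have hiJ' : i ∉ J' := (Finset.mem_sdiff.mp hiTJ).2
  rw [mu_tmul]
  by_cases hE : T.erase m = T'.erase i
  · by_cases hI : insert m J = insert i J'
    · exact absurd (key_inj T J T' J' hg hg' hne hne' i hiTJ hE hI) hdiff
    · rw [ee_mul_eF_eq_eL]
      rw [lam_eL_zero _ _ (cons_sort_nodup i J' hiJ') ?_ ?_, mul_zero]
      · rw [List.length_cons, Finset.length_sort, Finset.card_insert_of_notMem hmJ, hJcard]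
      · rw [cons_sort_toFinset]
        exact fun h => hI (h.symm)
  · rw [coeff_xF, if_neg hE, zero_mul]


lemma indF_support (T : Finset (Fin d)) : (indF T).support = T := by
  ext j
  simp [Finsupp.mem_support_iff, indF_apply]

lemma prod_X_eq_xF_univ : (∏ i, X i : MvPolynomial (Fin d) ℂ) = xF Finset.univ := by
  rw [xF, ← prod_X_pow_eq_monomial, indF_support]
  apply Finset.prod_congr rfl
  intro i _
  rw [indF_apply, if_pos (Finset.mem_univ i), pow_one]

/-- the image of a degree-`k` homogeneous polynomial under `flat P` -/
lemma flat_mem_span (k : ℕ) (hk : k ≤ d) (q : MvPolynomial (Fin d) ℂ)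
    (hq : q ∈ homogeneousSubmodule (Fin d) ℂ k) :
    flat (∏ i, X i : MvPolynomial (Fin d) ℂ) q ∈
      Submodule.span ℂ {y | ∃ T : Finset (Fin d), T.card = d - k ∧ y = xF T} := by
  classical
  have hhom : q.IsHomogeneous k := (mem_homogeneousSubmodule k q).mp hq
  rw [← support_sum_monomial_coeff q, map_sum]
  apply Submodule.sum_mem
  intro α hα
  rw [flat_monomial, prod_X_eq_xF_univ, Dop_xF_univ]
  by_cases hsf : ∀ i, α i ≤ 1
  · rw [if_pos hsf]
    apply Submodule.smul_mem
    apply Submodule.subset_span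
    refine ⟨(Finset.univ.filter (fun i => α i = 1))ᶜ, ?_, rfl⟩
    have hdeg : α.degree = k := by
      by_contra hne
      exact (Finsupp.mem_support_iff.mp hα) (hhom.coeff_eq_zero hne)
    have hsupp : α.support = Finset.univ.filter (fun i => α i = 1) := by
      ext i
      simp only [Finsupp.mem_support_iff, Finset.mem_filter, Finset.mem_univ, true_and]
      have := hsf i
      omega
    have hcard : (Finset.univ.filter (fun i => α i = 1)).card = k := by
      rw [← hsupp]
      rw [Finsupp.degree_apply] at hdeg
      have : ∑ i ∈ α.support, α i = ∑ i ∈ α.support, 1 := by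
        apply Finset.sum_congr rfl
        intro i hi
        have h1 := hsf i
        have h2 := Finsupp.mem_support_iff.mp hi
        omega
      rw [this, Finset.sum_const, smul_eq_mul, mul_one] at hdeg
      exact hdeg
    rw [Finset.card_compl, hcard, Fintype.card_fin]
  · rw [if_neg hsf, smul_zero]
    exact Submodule.zero_mem _

lemma flat_xF_compl (k : ℕ) (hk : k ≤ d) (T : Finset (Fin d)) (hT : T.card = d - k) :
    flat (∏ i, X i : MvPolynomial (Fin d) ℂ) (xF Tᶜ) = xF T := by
  classical
  rw [xF, flat_monomial, prod_X_eq_xF_univ, Dop_xF_univ, if_pos, one_smul]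
  · congr 1
    have : Finset.univ.filter (fun i => indF Tᶜ i = 1) = Tᶜ := by
      ext i
      simp only [Finset.mem_filter, Finset.mem_univ, true_and, indF_apply]
      by_cases h : i ∈ Tᶜ <;> simp [h]
    rw [this, compl_compl]
  · intro i
    rw [indF_apply]
    by_cases h : i ∈ Tᶜ <;> simp [h]

lemma tmul_mem_span {A : Set (MvPolynomial (Fin d) ℂ)}
    {B : Set (ExteriorAlgebra ℂ (Fin d → ℂ))}
    {x : MvPolynomial (Fin d) ℂ} {y : ExteriorAlgebra ℂ (Fin d → ℂ)}
    (hx : x ∈ Submodule.span ℂ A) (hy : y ∈ Submodule.span ℂ B) :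
    x ⊗ₜ[ℂ] y ∈ Submodule.span ℂ {z | ∃ a ∈ A, ∃ b ∈ B, z = a ⊗ₜ[ℂ] b} := by
  induction hx using Submodule.span_induction with
  | mem a ha =>
    induction hy using Submodule.span_induction with
    | mem b hb => exact Submodule.subset_span ⟨a, ha, b, hb, rfl⟩
    | zero => rw [tmul_zero]; exact Submodule.zero_mem _
    | add y1 y2 h1 h2 ih1 ih2 => rw [tmul_add]; exact Submodule.add_mem _ ih1 ih2
    | smul c y1 h1 ih1 => rw [tmul_smul]; exact Submodule.smul_mem _ _ ih1
  | zero => rw [zero_tmul]; exact Submodule.zero_mem _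
  | add x1 x2 h1 h2 ih1 ih2 => rw [add_tmul]; exact Submodule.add_mem _ ih1 ih2
  | smul c x1 h1 ih1 => rw [← smul_tmul']; exact Submodule.smul_mem _ _ ih1

/-- the image of the Koszul-Young flattening is spanned by the `vTJ`. -/
lemma image_eq_span_vTJ (k p : ℕ) (hk : 1 ≤ k) (hkd : k < d) :
    Submodule.map (KYF (∏ i, X i : MvPolynomial (Fin d) ℂ)) (SkLp d k p)
      = Submodule.span ℂ {z | ∃ T J : Finset (Fin d), T.card = d - k ∧ J.card = p ∧
          z = vTJ T J} := by
  classical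
  apply le_antisymm
  · rw [SkLp, Submodule.map_span, Submodule.span_le]
    rintro _ ⟨z, ⟨q, hq, w, hw, rfl⟩, rfl⟩
    have hKYF : KYF (∏ i, X i : MvPolynomial (Fin d) ℂ) (q ⊗ₜ w)
        = Kz d ((flat (∏ i, X i : MvPolynomial (Fin d) ℂ) q) ⊗ₜ w) := rfl
    rw [hKYF]
    have h1 := flat_mem_span k (le_of_lt hkd) q hq
    have h2 := pow_le_span_eF p hw
    have h3 := tmul_mem_span h1 h2
    have h4 := Submodule.apply_mem_span_image_of_mem_span (Kz d) h3
    refine Submodule.span_le.mpr ?_ h4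
    rintro _ ⟨z', ⟨a, ⟨T, hT, rfl⟩, b, ⟨J, hJ, rfl⟩, rfl⟩, rfl⟩
    exact Submodule.subset_span ⟨T, J, hT, hJ, rfl⟩
  · rw [Submodule.span_le]
    rintro _ ⟨T, J, hT, hJ, rfl⟩
    have hq : xF Tᶜ ∈ homogeneousSubmodule (Fin d) ℂ k := by
      rw [mem_homogeneousSubmodule, xF]
      apply isHomogeneous_monomial
      rw [indF_degree, Finset.card_compl, hT, Fintype.card_fin]
      omega
    have hw : eF J ∈ ((LinearMap.range (ExteriorAlgebra.ι ℂ (M := Fin d → ℂ))) ^ p :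
        Submodule ℂ (ExteriorAlgebra ℂ (Fin d → ℂ))) := by
      have := eF_mem_pow J
      rwa [hJ] at this
    have hmem : (xF Tᶜ ⊗ₜ[ℂ] eF J) ∈ SkLp d k p :=
      Submodule.subset_span ⟨xF Tᶜ, hq, eF J, hw, rfl⟩
    have hval : KYF (∏ i, X i : MvPolynomial (Fin d) ℂ) (xF Tᶜ ⊗ₜ eF J) = vTJ T J := by
      have : KYF (∏ i, X i : MvPolynomial (Fin d) ℂ) (xF Tᶜ ⊗ₜ eF J)
          = Kz d ((flat (∏ i, X i : MvPolynomial (Fin d) ℂ) (xF Tᶜ)) ⊗ₜ eF J) := rfl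
      rw [this, flat_xF_compl k (le_of_lt hkd) T hT, vTJ]
    exact hval ▸ Submodule.mem_map_of_mem hmem

/-- restrict the spanning set to good pairs -/
lemma span_vTJ_eq_good (k p : ℕ) :
    Submodule.span ℂ {z | ∃ T J : Finset (Fin d), T.card = d - k ∧ J.card = p ∧ z = vTJ T J}
      = Submodule.span ℂ {z | ∃ T J : Finset (Fin d), T.card = d - k ∧ J.card = p ∧
          Good T J ∧ z = vTJ T J} := by
  apply le_antisymm
  · rw [Submodule.span_le]
    rintro _ ⟨T, J, hT, hJ, rfl⟩
    have := vTJ_mem_span_good T J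
    refine Submodule.span_le.mpr ?_ this
    rintro _ ⟨T', J', hT', hJ', hgood, rfl⟩
    exact Submodule.subset_span ⟨T', J', by omega, by omega, hgood, rfl⟩
  · rw [Submodule.span_le]
    rintro _ ⟨T, J, hT, hJ, _, rfl⟩
    exact Submodule.subset_span ⟨T, J, hT, hJ, rfl⟩


def goodPairs (d k p : ℕ) : Finset (Finset (Fin d) × Finset (Fin d)) :=
  @Finset.filter _ (fun TJ => TJ.1.card = d - k ∧ TJ.2.card = p ∧ Good TJ.1 TJ.2)
    (Classical.decPred _) Finset.univ

lemma mem_goodPairs {k p : ℕ} {TJ : Finset (Fin d) × Finset (Fin d)} :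
    TJ ∈ goodPairs d k p ↔ TJ.1.card = d - k ∧ TJ.2.card = p ∧ Good TJ.1 TJ.2 := by
  classical
  simp [goodPairs, Finset.mem_filter]

lemma good_linearIndependent (k p : ℕ) :
    LinearIndependent ℂ (fun c : {x // x ∈ goodPairs d k p} => vTJ c.1.1 c.1.2) := by
  rw [Fintype.linearIndependent_iff]
  intro g hg c₀
  obtain ⟨hT₀, hJ₀, hgood₀⟩ := mem_goodPairs.mp c₀.2
  obtain ⟨hne₀, hlt₀⟩ := hgood₀
  set m := ((c₀.1.1 \ c₀.1.2).min' hne₀) with hm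
  set μ := mu (indF (c₀.1.1.erase m)) (insert m c₀.1.2) with hμ
  have happ := congrArg μ hg
  rw [map_sum, map_zero] at happ
  have hterm : ∀ c : {x // x ∈ goodPairs d k p}, c ≠ c₀ →
      μ (g c • vTJ c.1.1 c.1.2) = 0 := by
    intro c hc
    obtain ⟨hT, hJ, hgood⟩ := mem_goodPairs.mp c.2
    obtain ⟨hne, hlt⟩ := hgood
    rw [map_smul]
    rw [mu_vTJ_off c₀.1.1 c₀.1.2 c.1.1 c.1.2 ⟨hne₀, hlt₀⟩ ⟨hne, hlt⟩ hne₀ hne (by omega) ?_,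
      smul_zero]
    intro ⟨h1, h2⟩
    apply hc
    apply Subtype.ext
    exact Prod.ext h1.symm h2.symm
  rw [Finset.sum_eq_single c₀ (fun c _ hc => hterm c hc) (by intro h; exact absurd (Finset.mem_univ c₀) h)] at happ
  rw [map_smul] at happ
  rcases smul_eq_zero.mp happ with h | h
  · exact h
  · exact absurd h (mu_vTJ_diag c₀.1.1 c₀.1.2 hne₀)

lemma span_good_eq_range (k p : ℕ) :
    {z | ∃ T J : Finset (Fin d), T.card = d - k ∧ J.card = p ∧ Good T J ∧ z = vTJ T J}
      = Set.range (fun c : {x // x ∈ goodPairs d k p} => vTJ c.1.1 c.1.2) := by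
  ext z
  constructor
  · rintro ⟨T, J, hT, hJ, hgood, rfl⟩
    exact ⟨⟨(T, J), mem_goodPairs.mpr ⟨hT, hJ, hgood⟩⟩, rfl⟩
  · rintro ⟨c, rfl⟩
    obtain ⟨hT, hJ, hgood⟩ := mem_goodPairs.mp c.2
    exact ⟨c.1.1, c.1.2, hT, hJ, hgood, rfl⟩

lemma finrank_span_good (k p : ℕ) :
    Module.finrank ℂ (Submodule.span ℂ
      {z | ∃ T J : Finset (Fin d), T.card = d - k ∧ J.card = p ∧ Good T J ∧ z = vTJ T J})
      = (goodPairs d k p).card := by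
  rw [span_good_eq_range, finrank_span_eq_card (good_linearIndependent k p),
    Fintype.card_coe]


/-- for a good pair, the minimum of the symmetric difference lies in `T \ J`. -/
lemma min_mem_sdiff {T J : Finset (Fin d)} (hgood : Good T J)
    (hD : ((T ∪ J) \ (T ∩ J)).Nonempty) :
    ((T ∪ J) \ (T ∩ J)).min' hD ∈ T \ J := by
  obtain ⟨hne, hlt⟩ := hgood
  set m := ((T ∪ J) \ (T ∩ J)).min' hD with hm
  have hmD : m ∈ (T ∪ J) \ (T ∩ J) := Finset.min'_mem _ _
  rw [Finset.mem_sdiff, Finset.mem_union, Finset.mem_inter] at hmD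
  by_cases hmT : m ∈ T
  · exact Finset.mem_sdiff.mpr ⟨hmT, fun hmJ => hmD.2 ⟨hmT, hmJ⟩⟩
  · exfalso
    have hmJT : m ∈ J \ T := Finset.mem_sdiff.mpr ⟨hmD.1.resolve_left hmT, hmT⟩
    have h1 : (T \ J).min' hne < m := hlt m hmJT
    have h2 : m ≤ (T \ J).min' hne := by
      apply Finset.min'_le
      have := Finset.min'_mem (T \ J) hne
      rw [Finset.mem_sdiff] at this ⊢
      rw [Finset.mem_union, Finset.mem_inter]
      exact ⟨Or.inl this.1, fun hc => this.2 hc.2⟩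
    omega

lemma card_fiber_SD (k p s : ℕ) (hk : 1 ≤ k) (hkd : k < d)
    (hsp : s ≤ p) (hsk : s + 1 ≤ d - k) (hpk : p ≤ k + s)
    (S D : Finset (Fin d)) (hS : S.card = s) (hDsub : D ⊆ Finset.univ \ S)
    (hD : D.card = d - k + p - 2 * s) :
    ((goodPairs d k p).filter (fun TJ => TJ.1 ∩ TJ.2 = S ∧ (TJ.1 ∪ TJ.2) \ (TJ.1 ∩ TJ.2) = D)).card
      = (d - k + p - 2 * s - 1).choose (p - s) := by
  classical
  have hu1 : 1 ≤ d - k + p - 2 * s := by omega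
  have hDne : D.Nonempty := Finset.card_pos.mp (by omega)
  set m := D.min' hDne with hm
  have hmD : m ∈ D := Finset.min'_mem _ _
  have hSD : ∀ x ∈ D, x ∉ S := by
    intro x hx
    have := hDsub hx
    rw [Finset.mem_sdiff] at this
    exact this.2
  have key : ((goodPairs d k p).filter
      (fun TJ => TJ.1 ∩ TJ.2 = S ∧ (TJ.1 ∪ TJ.2) \ (TJ.1 ∩ TJ.2) = D)).card
      = ((D.erase m).powersetCard (d - k - s - 1)).card := by
    apply Finset.card_nbij' (i := fun TJ => (TJ.1 \ TJ.2).erase m)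
      (j := fun A => (S ∪ insert m A, S ∪ (D \ insert m A)))
    -- forward maps into target
    · intro TJ hTJ
      rw [Finset.mem_coe, Finset.mem_filter] at hTJ
      obtain ⟨hgp, hinter, hsymm⟩ := hTJ
      obtain ⟨hT, hJ, hgood⟩ := mem_goodPairs.mp hgp
      have hDne' : ((TJ.1 ∪ TJ.2) \ (TJ.1 ∩ TJ.2)).Nonempty := by rw [hsymm]; exact hDne
      have hmm : ((TJ.1 ∪ TJ.2) \ (TJ.1 ∩ TJ.2)).min' hDne' = m := by
        congr 1
      have hmem := min_mem_sdiff hgood hDne'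
      rw [hmm] at hmem
      rw [Finset.mem_coe, Finset.mem_powersetCard]
      constructor
      · intro x hx
        rw [Finset.mem_erase] at hx ⊢
        refine ⟨hx.1, ?_⟩
        rw [← hsymm, Finset.mem_sdiff, Finset.mem_union, Finset.mem_inter]
        rw [Finset.mem_sdiff] at hx
        exact ⟨Or.inl hx.2.1, fun hc => hx.2.2 hc.2⟩
      · rw [Finset.card_erase_of_mem hmem]
        have hcard : (TJ.1 \ TJ.2).card = d - k - s := by
          have h1 : (TJ.1 ∩ TJ.2).card + (TJ.1 \ TJ.2).card = TJ.1.card :=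
            Finset.card_inter_add_card_sdiff _ _
          rw [hinter, hS, hT] at h1
          omega
        omega
    -- backward maps into source
    · intro A hA
      rw [Finset.mem_coe, Finset.mem_powersetCard] at hA
      obtain ⟨hAsub, hAcard⟩ := hA
      have hAD : A ⊆ D := hAsub.trans (Finset.erase_subset _ _)
      have hmA : m ∉ A := fun h => (Finset.mem_erase.mp (hAsub h)).1 rfl
      have hAS : ∀ x ∈ insert m A, x ∉ S := by
        intro x hx
        rcases Finset.mem_insert.mp hx with rfl | hx
        · exact hSD _ hmD
        · exact hSD _ (hAD hx)
      have hiAD : insert m A ⊆ D := by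
        intro x hx
        rcases Finset.mem_insert.mp hx with rfl | hx
        · exact hmD
        · exact hAD hx
      have hcardiA : (insert m A).card = d - k - s := by
        rw [Finset.card_insert_of_notMem hmA, hAcard]
        omega
      have hcardD' : (D \ insert m A).card = p - s := by
        rw [Finset.card_sdiff_of_subset hiAD, hD, hcardiA]
        omega
      have hdisj1 : Disjoint S (insert m A) :=
        Finset.disjoint_left.mpr (fun {x} hx hx2 => hAS x hx2 hx)
      have hdisj2 : Disjoint S (D \ insert m A) :=
        Finset.disjoint_left.mpr (fun {x} hx hx2 => hSD x (Finset.mem_sdiff.mp hx2).1 hx)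
      have hTcard : (S ∪ insert m A).card = d - k := by
        rw [Finset.card_union_of_disjoint hdisj1, hS, hcardiA]
        omega
      have hJcard : (S ∪ (D \ insert m A)).card = p := by
        rw [Finset.card_union_of_disjoint hdisj2, hS, hcardD']
        omega
      -- intersection is S
      have hint : (S ∪ insert m A) ∩ (S ∪ (D \ insert m A)) = S := by
        ext x
        simp only [Finset.mem_inter, Finset.mem_union, Finset.mem_sdiff]
        constructor
        · rintro ⟨h1 | h1, h2 | h2⟩
          · exact h1
          · exact h1
          · exact h2
          · exact absurd h1 h2.2
        · intro hx
          exact ⟨Or.inl hx, Or.inl hx⟩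
      have hunion : (S ∪ insert m A) ∪ (S ∪ (D \ insert m A)) = S ∪ D := by
        ext x
        simp only [Finset.mem_union, Finset.mem_sdiff]
        constructor
        · rintro ((h | h) | (h | h))
          · exact Or.inl h
          · exact Or.inr (hiAD h)
          · exact Or.inl h
          · exact Or.inr h.1
        · rintro (h | h)
          · exact Or.inl (Or.inl h)
          · by_cases hx : x ∈ insert m A
            · exact Or.inl (Or.inr hx)
            · exact Or.inr (Or.inr ⟨h, hx⟩)
      have hsymm : ((S ∪ insert m A) ∪ (S ∪ (D \ insert m A)))
          \ ((S ∪ insert m A) ∩ (S ∪ (D \ insert m A))) = D := by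
        rw [hint, hunion]
        ext x
        simp only [Finset.mem_sdiff, Finset.mem_union]
        constructor
        · rintro ⟨h | h, h2⟩
          · exact absurd h h2
          · exact h
        · intro hx
          exact ⟨Or.inr hx, hSD x hx⟩
      -- good
      have hTmJ : (S ∪ insert m A) \ (S ∪ (D \ insert m A)) = insert m A := by
        ext x
        simp only [Finset.mem_sdiff, Finset.mem_union]
        constructor
        · rintro ⟨h1 | h1, h2⟩
          · exact absurd (Or.inl h1) h2
          · exact h1
        · intro hx
          refine ⟨Or.inr hx, ?_⟩
          rintro (h | h)
          · exact hAS x hx h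
          · exact h.2 hx
      have hJmT : (S ∪ (D \ insert m A)) \ (S ∪ insert m A) = D \ insert m A := by
        ext x
        simp only [Finset.mem_sdiff, Finset.mem_union]
        constructor
        · rintro ⟨h1 | h1, h2⟩
          · exact absurd (Or.inl h1) h2
          · exact h1
        · intro hx
          refine ⟨Or.inr hx, ?_⟩
          rintro (h | h)
          · exact hSD x hx.1 h
          · exact hx.2 h
      have hmem : m ∈ (S ∪ insert m A) \ (S ∪ (D \ insert m A)) := by
        rw [hTmJ]; exact Finset.mem_insert_self m A
      have hgood : Good (S ∪ insert m A) (S ∪ (D \ insert m A)) := by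
        refine ⟨⟨m, hmem⟩, ?_⟩
        intro j hj
        rw [hJmT] at hj
        rw [Finset.mem_sdiff] at hj
        have hjm : j ≠ m := fun h => hj.2 (h ▸ Finset.mem_insert_self m A)
        have h1 : m < j := lt_of_le_of_ne (Finset.min'_le _ _ hj.1) (Ne.symm hjm)
        calc ((S ∪ insert m A) \ (S ∪ (D \ insert m A))).min' _
            ≤ m := Finset.min'_le _ _ hmem
          _ < j := h1
      rw [Finset.mem_coe, Finset.mem_filter]
      exact ⟨mem_goodPairs.mpr ⟨hTcard, hJcard, hgood⟩, hint, hint ▸ hsymm⟩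
    -- left inverse
    · intro TJ hTJ
      rw [Finset.mem_coe, Finset.mem_filter] at hTJ
      obtain ⟨hgp, hinter, hsymm⟩ := hTJ
      obtain ⟨hT, hJ, hgood⟩ := mem_goodPairs.mp hgp
      have hDne' : ((TJ.1 ∪ TJ.2) \ (TJ.1 ∩ TJ.2)).Nonempty := by rw [hsymm]; exact hDne
      have hmm : ((TJ.1 ∪ TJ.2) \ (TJ.1 ∩ TJ.2)).min' hDne' = m := by congr 1
      have hmem := min_mem_sdiff hgood hDne'
      rw [hmm] at hmem
      have hins : insert m ((TJ.1 \ TJ.2).erase m) = TJ.1 \ TJ.2 :=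
        Finset.insert_erase hmem
      have hT1 : S ∪ insert m ((TJ.1 \ TJ.2).erase m) = TJ.1 := by
        rw [hins, ← hinter]
        ext x
        simp only [Finset.mem_union, Finset.mem_inter, Finset.mem_sdiff]
        constructor
        · rintro (h | h)
          · exact h.1
          · exact h.1
        · intro hx
          by_cases hj : x ∈ TJ.2
          · exact Or.inl ⟨hx, hj⟩
          · exact Or.inr ⟨hx, hj⟩
      have hD1 : D \ insert m ((TJ.1 \ TJ.2).erase m) = TJ.2 \ TJ.1 := by
        rw [hins, ← hsymm]
        ext x
        simp only [Finset.mem_sdiff, Finset.mem_union, Finset.mem_inter]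
        constructor
        · rintro ⟨⟨h1, h2⟩, h3⟩
          rcases h1 with h | h
          · exfalso
            apply h3
            refine ⟨h, ?_⟩
            intro hj
            exact h2 ⟨h, hj⟩
          · refine ⟨h, ?_⟩
            intro ht
            exact h2 ⟨ht, h⟩
        · rintro ⟨h1, h2⟩
          refine ⟨⟨Or.inr h1, fun hc => h2 hc.1⟩, fun hc => h2 hc.1⟩
      have hJ1 : S ∪ (TJ.2 \ TJ.1) = TJ.2 := by
        rw [← hinter]
        ext x
        simp only [Finset.mem_union, Finset.mem_inter, Finset.mem_sdiff]
        constructor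
        · rintro (h | h)
          · exact h.2
          · exact h.1
        · intro hx
          by_cases ht : x ∈ TJ.1
          · exact Or.inl ⟨ht, hx⟩
          · exact Or.inr ⟨hx, ht⟩
      beta_reduce
      rw [hT1, hD1, hJ1]
    -- right inverse
    · intro A hA
      rw [Finset.mem_coe, Finset.mem_powersetCard] at hA
      obtain ⟨hAsub, hAcard⟩ := hA
      have hAD : A ⊆ D := hAsub.trans (Finset.erase_subset _ _)
      have hmA : m ∉ A := fun h => (Finset.mem_erase.mp (hAsub h)).1 rfl
      have hTmJ : (S ∪ insert m A) \ (S ∪ (D \ insert m A)) = insert m A := by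
        ext x
        simp only [Finset.mem_sdiff, Finset.mem_union]
        constructor
        · rintro ⟨h1 | h1, h2⟩
          · exact absurd (Or.inl h1) h2
          · exact h1
        · intro hx
          have hxD : x ∈ D := by
            rcases Finset.mem_insert.mp hx with rfl | h
            · exact hmD
            · exact hAD h
          refine ⟨Or.inr hx, ?_⟩
          rintro (h | h)
          · exact hSD x hxD h
          · exact h.2 hx
      beta_reduce
      rw [hTmJ, Finset.erase_insert hmA]
  rw [key, Finset.card_powersetCard, Finset.card_erase_of_mem hmD, hD]
  have h1 : d - k + p - 2 * s - 1 - (d - k - s - 1) = p - s := by omega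
  rw [← h1, Nat.choose_symm (by omega)]


lemma card_bounds {k p : ℕ} (hk : 1 ≤ k) (hkd : k < d) (hp : 1 ≤ p) (hpd : p < d)
    {TJ : Finset (Fin d) × Finset (Fin d)} (hTJ : TJ ∈ goodPairs d k p) :
    p - k ≤ (TJ.1 ∩ TJ.2).card ∧ (TJ.1 ∩ TJ.2).card ≤ p
      ∧ (TJ.1 ∩ TJ.2).card + 1 ≤ d - k := by
  classical
  obtain ⟨hT, hJ, hgood⟩ := mem_goodPairs.mp hTJ
  obtain ⟨hne, -⟩ := hgood
  have h1 : (TJ.1 ∩ TJ.2).card + (TJ.1 \ TJ.2).card = TJ.1.card :=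
    Finset.card_inter_add_card_sdiff _ _
  have h2 : (TJ.2 ∩ TJ.1).card + (TJ.2 \ TJ.1).card = TJ.2.card :=
    Finset.card_inter_add_card_sdiff _ _
  rw [Finset.inter_comm] at h2
  have h3 : 1 ≤ (TJ.1 \ TJ.2).card := Finset.card_pos.mpr hne
  have h4 : (TJ.2 \ TJ.1).card ≤ TJ.1ᶜ.card :=
    Finset.card_le_card (fun x hx => by
      rw [Finset.mem_compl]
      rw [Finset.mem_sdiff] at hx
      exact hx.2)
  rw [Finset.card_compl, Fintype.card_fin, hT] at h4
  rw [hT] at h1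
  rw [hJ] at h2
  omega

lemma card_goodPairs (k p : ℕ) (hk : 1 ≤ k) (hkd : k < d) (hp : 1 ≤ p) (hpd : p < d) :
    (goodPairs d k p).card = ∑ s ∈ Finset.Icc (p - k) (min p (d - k - 1)),
      d.choose s * (d - s).choose (d - k + p - 2 * s)
        * (d - k + p - 2 * s - 1).choose (p - s) := by
  classical
  rw [Finset.card_eq_sum_card_fiberwise
    (f := fun TJ => (TJ.1 ∩ TJ.2).card)
    (t := Finset.Icc (p - k) (min p (d - k - 1)))
    (fun TJ hTJ => by
      obtain ⟨hb1, hb2, hb3⟩ := card_bounds hk hkd hp hpd hTJ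
      rw [Finset.mem_coe, Finset.mem_Icc]
      dsimp only
      omega)]
  apply Finset.sum_congr rfl
  intro s hs
  rw [Finset.mem_Icc] at hs
  have hsp : s ≤ p := le_trans hs.2 (min_le_left _ _)
  have hsk : s + 1 ≤ d - k := by
    have := le_trans hs.2 (min_le_right _ _)
    omega
  have hpk : p ≤ k + s := by omega
  -- fiber over the intersection S
  rw [Finset.card_eq_sum_card_fiberwise
    (f := fun TJ => TJ.1 ∩ TJ.2)
    (t := Finset.univ.powersetCard s)
    (fun TJ hTJ => by
      rw [Finset.mem_coe, Finset.mem_filter] at hTJ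
      rw [Finset.mem_coe, Finset.mem_powersetCard]
      exact ⟨Finset.subset_univ _, hTJ.2⟩)]
  have hinner : ∀ S ∈ Finset.univ.powersetCard s,
      ((((goodPairs d k p).filter (fun TJ => (TJ.1 ∩ TJ.2).card = s)).filter
        (fun TJ => TJ.1 ∩ TJ.2 = S)).card)
      = (d - s).choose (d - k + p - 2 * s) * (d - k + p - 2 * s - 1).choose (p - s) := by
    intro S hS
    rw [Finset.mem_powersetCard] at hS
    obtain ⟨-, hScard⟩ := hS
    rw [Finset.filter_filter]
    have hpred : ((goodPairs d k p).filter
        (fun TJ => (TJ.1 ∩ TJ.2).card = s ∧ TJ.1 ∩ TJ.2 = S))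
        = (goodPairs d k p).filter (fun TJ => TJ.1 ∩ TJ.2 = S) := by
      apply Finset.filter_congr
      intro TJ _
      constructor
      · rintro ⟨-, h⟩; exact h
      · intro h; exact ⟨by rw [h, hScard], h⟩
    rw [hpred]
    -- fiber over the symmetric difference D
    rw [Finset.card_eq_sum_card_fiberwise
      (f := fun TJ => (TJ.1 ∪ TJ.2) \ (TJ.1 ∩ TJ.2))
      (t := (Finset.univ \ S).powersetCard (d - k + p - 2 * s))
      (fun TJ hTJ => by
        rw [Finset.mem_coe, Finset.mem_filter] at hTJ
        obtain ⟨hgp, hint⟩ := hTJ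
        obtain ⟨hT, hJ, -⟩ := mem_goodPairs.mp hgp
        rw [Finset.mem_coe, Finset.mem_powersetCard]
        dsimp only
        constructor
        · intro x hx
          rw [Finset.mem_sdiff] at hx ⊢
          exact ⟨Finset.mem_univ x, by rw [← hint]; exact hx.2⟩
        · have h5 : (TJ.1 ∩ TJ.2).card + (TJ.1 ∪ TJ.2).card = TJ.1.card + TJ.2.card :=
            Finset.card_inter_add_card_union _ _
          have h6 : ((TJ.1 ∪ TJ.2) \ (TJ.1 ∩ TJ.2)).card
              = (TJ.1 ∪ TJ.2).card - (TJ.1 ∩ TJ.2).card :=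
            Finset.card_sdiff_of_subset (Finset.inter_subset_union)
          rw [hint, hScard] at h5 h6
          rw [hint]
          rw [hT, hJ] at h5
          omega)]
    have hfinal : ∀ D ∈ (Finset.univ \ S).powersetCard (d - k + p - 2 * s),
        (((goodPairs d k p).filter (fun TJ => TJ.1 ∩ TJ.2 = S)).filter
          (fun TJ => (TJ.1 ∪ TJ.2) \ (TJ.1 ∩ TJ.2) = D)).card
        = (d - k + p - 2 * s - 1).choose (p - s) := by
      intro D hD
      rw [Finset.mem_powersetCard] at hD
      rw [Finset.filter_filter]
      exact card_fiber_SD k p s hk hkd hsp hsk hpk S D hScard hD.1 hD.2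
    rw [Finset.sum_congr rfl hfinal, Finset.sum_const, Finset.card_powersetCard,
      Finset.card_sdiff_of_subset (Finset.subset_univ S), Finset.card_univ, Fintype.card_fin, hScard,
      smul_eq_mul]
  rw [Finset.sum_congr rfl hinner, Finset.sum_const, Finset.card_powersetCard,
    Finset.card_univ, Fintype.card_fin, smul_eq_mul, mul_assoc]


end KYFaux
end

/-- The rank of the Koszul Young flattening of `x_1 ⋯ x_d` equals `S(p,d,k)`. -/
theorem KYF_rank_monomial (d k p : ℕ) (hk : 1 ≤ k) (hkd : k < d) (hp : 1 ≤ p) (hpd : p < d) :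
    Module.finrank ℂ
        (Submodule.map (KYF (∏ i, X i : MvPolynomial (Fin d) ℂ)) (SkLp d k p))
      = ∑ s ∈ Finset.Icc (p - k) (min p (d - k - 1)),
          d.choose s * (d - s).choose (d - k + p - 2 * s)
            * (d - k + p - 2 * s - 1).choose (p - s) := by
  open KYFaux in
  rw [KYFaux.image_eq_span_vTJ k p hk hkd, KYFaux.span_vTJ_eq_good,
    KYFaux.finrank_span_good, KYFaux.card_goodPairs k p hk hkd hp hpd]
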